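/- Supermartingale construction in the stopping-time Chernoff bound: let (Ω, F, P) be a probability space with a filtration (F_n)_{n≥0}, let c > 0 and ε ∈ (0,1), and let (x_n)_{n≥1} and (y_n)_{n≥1} be real-valued processes such that for every n ≥ 1, x_n and y_n are F_n-measurable, x_n ∈ [0,c] and y_n ∈ [0,c] almost surely, and E[x_n | F_{n−1}] ≤ E[y_n | F_{n−1}] almost surely. Define φ_0 = 1 and φ_n = (1+ε)^{Σ_{t=1}^{n} x_t / c} · (1−ε)^{Σ_{t=1}^{n} y_t / c} for n ≥ 1. Then (φ_n)_{n≥0} is a nonnegative supermartingale with respect to (F_n)_{n≥0}: each φ_n is nonnegative and F_n-measurable, and E[φ_n | F_{n−1}] ≤ φ_{n−1} almost surely for every n ≥ 1. -/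

import Mathlib

open MeasureTheory Finset

lemma aux_meas_const_rpow {α : Type*} {mα : MeasurableSpace α} {f : α → ℝ}
    (hf : Measurable f) {a : ℝ} (ha : 0 < a) : Measurable fun ω => a ^ f ω := by
  have h : (fun ω => a ^ f ω) = fun ω => Real.exp (Real.log a * f ω) := by
    funext ω; rw [Real.rpow_def_of_pos ha]
  rw [h]
  exact Real.measurable_exp.comp (hf.const_mul _)

lemma aux_rpow_le_linear {a u : ℝ} (ha : 0 < a) (h0 : 0 ≤ u) (h1 : u ≤ 1) :
    a ^ u ≤ 1 + u * (a - 1) := by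
  have h := convexOn_exp.2 (Set.mem_univ (0:ℝ)) (Set.mem_univ (Real.log a))
    (by linarith : (0:ℝ) ≤ 1 - u) h0 (by ring)
  simp only [smul_eq_mul, mul_zero, zero_add, Real.exp_zero, mul_one, Real.exp_log ha] at h
  rw [Real.rpow_def_of_pos ha, mul_comm]
  linarith

/-- Supermartingale construction in the stopping-time Chernoff bound. -/
theorem stmt10
    {Ω : Type*} {m0 : MeasurableSpace Ω}
    (P : Measure Ω) [IsProbabilityMeasure P]
    (ℱ : Filtration ℕ m0)
    (c : ℝ) (hc : 0 < c)
    (ε : ℝ) (hε : ε ∈ Set.Ioo (0 : ℝ) 1)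
    (x y : ℕ → Ω → ℝ)
    (hxm : ∀ n, 1 ≤ n → Measurable[ℱ n] (x n))
    (hym : ∀ n, 1 ≤ n → Measurable[ℱ n] (y n))
    (hxb : ∀ n, 1 ≤ n → ∀ᵐ ω ∂P, x n ω ∈ Set.Icc 0 c)
    (hyb : ∀ n, 1 ≤ n → ∀ᵐ ω ∂P, y n ω ∈ Set.Icc 0 c)
    (hcond : ∀ n, 1 ≤ n → ∀ᵐ ω ∂P, (P[x n|ℱ (n - 1)]) ω ≤ (P[y n|ℱ (n - 1)]) ω)
    (φ : ℕ → Ω → ℝ)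
    (hφ0 : ∀ ω, φ 0 ω = 1)
    (hφ : ∀ n, 1 ≤ n → ∀ ω, φ n ω =
      (1 + ε) ^ ((∑ t ∈ Finset.Icc 1 n, x t ω) / c) *
        (1 - ε) ^ ((∑ t ∈ Finset.Icc 1 n, y t ω) / c)) :
    (∀ n ω, 0 ≤ φ n ω) ∧
    (∀ n, Measurable[ℱ n] (φ n)) ∧
    (∀ n, 1 ≤ n → ∀ᵐ ω ∂P, (P[φ n|ℱ (n - 1)]) ω ≤ φ (n - 1) ω) := by
  obtain ⟨hε0, hε1⟩ := hε
  have h1ε : (0:ℝ) < 1 + ε := by linarith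
  have h2ε : (0:ℝ) < 1 - ε := by linarith
  -- extended formula for φ, valid also at 0
  have hφ' : ∀ n ω, φ n ω =
      (1 + ε) ^ ((∑ t ∈ Finset.Icc 1 n, x t ω) / c) *
        (1 - ε) ^ ((∑ t ∈ Finset.Icc 1 n, y t ω) / c) := by
    intro n ω
    rcases Nat.eq_zero_or_pos n with rfl | hn
    · simp [hφ0]
    · exact hφ n hn ω
  -- nonnegativity
  have hnn : ∀ n ω, 0 ≤ φ n ω := by
    intro n ω
    rw [hφ' n ω]
    exact mul_nonneg (Real.rpow_nonneg h1ε.le _) (Real.rpow_nonneg h2ε.le _)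
  -- measurability
  have hmeas : ∀ n, Measurable[ℱ n] (φ n) := by
    intro n
    have hsx : Measurable[ℱ n] (fun ω => ∑ t ∈ Finset.Icc 1 n, x t ω) :=
      Finset.measurable_sum _ fun t ht =>
        (hxm t (Finset.mem_Icc.1 ht).1).mono (ℱ.mono (Finset.mem_Icc.1 ht).2) le_rfl
    have hsy : Measurable[ℱ n] (fun ω => ∑ t ∈ Finset.Icc 1 n, y t ω) :=
      Finset.measurable_sum _ fun t ht =>
        (hym t (Finset.mem_Icc.1 ht).1).mono (ℱ.mono (Finset.mem_Icc.1 ht).2) le_rfl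
    have : φ n = fun ω =>
        (1 + ε) ^ ((∑ t ∈ Finset.Icc 1 n, x t ω) / c) *
          (1 - ε) ^ ((∑ t ∈ Finset.Icc 1 n, y t ω) / c) := funext (hφ' n)
    rw [this]
    exact (aux_meas_const_rpow (hsx.div_const c) h1ε).mul
      (aux_meas_const_rpow (hsy.div_const c) h2ε)
  refine ⟨hnn, hmeas, ?_⟩
  -- a.e. bounds on the whole processes
  have hXae : ∀ᵐ ω ∂P, ∀ t, 1 ≤ t → x t ω ∈ Set.Icc 0 c := by
    rw [ae_all_iff]
    intro t
    by_cases ht : 1 ≤ t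
    · filter_upwards [hxb t ht] with ω hω _ using hω
    · filter_upwards with ω h using absurd h ht
  have hYae : ∀ᵐ ω ∂P, ∀ t, 1 ≤ t → y t ω ∈ Set.Icc 0 c := by
    rw [ae_all_iff]
    intro t
    by_cases ht : 1 ≤ t
    · filter_upwards [hyb t ht] with ω hω _ using hω
    · filter_upwards with ω h using absurd h ht
  -- integrability of φ n
  have hφint : ∀ n, Integrable (φ n) P := by
    intro n
    refine (integrable_const ((1 + ε) ^ (n:ℝ))).mono'
      (((hmeas n).mono (ℱ.le n) le_rfl).aestronglyMeasurable) ?_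
    filter_upwards [hXae, hYae] with ω hX hY
    rw [Real.norm_of_nonneg (hnn n ω), hφ' n ω]
    have hsx0 : 0 ≤ ∑ t ∈ Finset.Icc 1 n, x t ω :=
      Finset.sum_nonneg fun t ht => (hX t (Finset.mem_Icc.1 ht).1).1
    have hsy0 : 0 ≤ ∑ t ∈ Finset.Icc 1 n, y t ω :=
      Finset.sum_nonneg fun t ht => (hY t (Finset.mem_Icc.1 ht).1).1
    have hsx1 : ∑ t ∈ Finset.Icc 1 n, x t ω ≤ n * c := by
      calc ∑ t ∈ Finset.Icc 1 n, x t ω ≤ ∑ t ∈ Finset.Icc 1 n, c :=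
            Finset.sum_le_sum fun t ht => (hX t (Finset.mem_Icc.1 ht).1).2
        _ = n * c := by simp [Nat.card_Icc]
    have h1 : (1 + ε) ^ ((∑ t ∈ Finset.Icc 1 n, x t ω) / c) ≤ (1 + ε) ^ (n:ℝ) := by
      apply Real.rpow_le_rpow_of_exponent_le (by linarith)
      rw [div_le_iff₀ hc]
      linarith [hsx1]
    have h2 : (1 - ε) ^ ((∑ t ∈ Finset.Icc 1 n, y t ω) / c) ≤ 1 :=
      Real.rpow_le_one h2ε.le (by linarith) (div_nonneg hsy0 hc.le)
    calc (1 + ε) ^ ((∑ t ∈ Finset.Icc 1 n, x t ω) / c) *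
          (1 - ε) ^ ((∑ t ∈ Finset.Icc 1 n, y t ω) / c)
        ≤ (1 + ε) ^ (n:ℝ) * 1 :=
          mul_le_mul h1 h2 (Real.rpow_nonneg h2ε.le _) (Real.rpow_nonneg h1ε.le _)
      _ = (1 + ε) ^ (n:ℝ) := mul_one _
  -- the supermartingale inequality
  intro n hn
  obtain ⟨m, rfl⟩ : ∃ m, n = m + 1 := ⟨n - 1, (Nat.succ_pred_eq_of_pos hn).symm⟩
  simp only [Nat.add_sub_cancel]
  set g : Ω → ℝ := fun ω => (1 + ε) ^ (x (m+1) ω / c) * (1 - ε) ^ (y (m+1) ω / c) with hg_def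
  -- factorization
  have hfac : φ (m+1) = φ m * g := by
    funext ω
    rw [Pi.mul_apply, hφ' (m+1) ω, hφ' m ω, hg_def]
    rw [Finset.sum_Icc_succ_top (Nat.le_add_left 1 m) (fun t => x t ω),
      Finset.sum_Icc_succ_top (Nat.le_add_left 1 m) (fun t => y t ω),
      add_div, add_div, Real.rpow_add h1ε, Real.rpow_add h2ε]
    ring
  -- measurability and integrability of g
  have hgmeas : Measurable (g : Ω → ℝ) := by
    have hx' : Measurable (x (m+1)) := (hxm (m+1) (Nat.le_add_left 1 m)).mono (ℱ.le (m+1)) le_rfl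
    have hy' : Measurable (y (m+1)) := (hym (m+1) (Nat.le_add_left 1 m)).mono (ℱ.le (m+1)) le_rfl
    exact (aux_meas_const_rpow (hx'.div_const c) h1ε).mul
      (aux_meas_const_rpow (hy'.div_const c) h2ε)
  have hgint : Integrable g P := by
    refine (integrable_const (1 + ε)).mono' hgmeas.aestronglyMeasurable ?_
    filter_upwards [hxb (m+1) (Nat.le_add_left 1 m), hyb (m+1) (Nat.le_add_left 1 m)]
      with ω hX hY
    have h0 : 0 ≤ g ω :=
      mul_nonneg (Real.rpow_nonneg h1ε.le _) (Real.rpow_nonneg h2ε.le _)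
    rw [Real.norm_of_nonneg h0, hg_def]
    have h1 : (1 + ε) ^ (x (m+1) ω / c) ≤ (1 + ε) := by
      have hle : x (m+1) ω / c ≤ 1 := (div_le_one hc).2 hX.2
      have := Real.rpow_le_rpow_of_exponent_le (by linarith : (1:ℝ) ≤ 1 + ε) hle
      rwa [Real.rpow_one] at this
    have h2 : (1 - ε) ^ (y (m+1) ω / c) ≤ 1 :=
      Real.rpow_le_one h2ε.le (by linarith) (div_nonneg hY.1 hc.le)
    calc (1 + ε) ^ (x (m+1) ω / c) * (1 - ε) ^ (y (m+1) ω / c)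
        ≤ (1 + ε) * 1 := mul_le_mul h1 h2 (Real.rpow_nonneg h2ε.le _) (by linarith)
      _ = 1 + ε := mul_one _
  -- integrability of x, y
  have hxint : Integrable (x (m+1)) P := by
    refine (integrable_const c).mono'
      (((hxm (m+1) (Nat.le_add_left 1 m)).mono (ℱ.le (m+1)) le_rfl).aestronglyMeasurable) ?_
    filter_upwards [hxb (m+1) (Nat.le_add_left 1 m)] with ω hω
    rw [Real.norm_of_nonneg hω.1]; exact hω.2
  have hyint : Integrable (y (m+1)) P := by
    refine (integrable_const c).mono'
      (((hym (m+1) (Nat.le_add_left 1 m)).mono (ℱ.le (m+1)) le_rfl).aestronglyMeasurable) ?_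
    filter_upwards [hyb (m+1) (Nat.le_add_left 1 m)] with ω hω
    rw [Real.norm_of_nonneg hω.1]; exact hω.2
  -- the dominating linear function
  set h : Ω → ℝ := (fun _ => (1:ℝ)) + (ε/c) • (x (m+1) - y (m+1)) with hh_def
  have hhint : Integrable h P := (integrable_const 1).add ((hxint.sub hyint).smul (ε/c))
  -- g ≤ h a.e.
  have hgh : g ≤ᵐ[P] h := by
    filter_upwards [hxb (m+1) (Nat.le_add_left 1 m), hyb (m+1) (Nat.le_add_left 1 m)]
      with ω hX hY
    set u := x (m+1) ω / c with hu
    set v := y (m+1) ω / c with hv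
    have hu0 : 0 ≤ u := div_nonneg hX.1 hc.le
    have hu1 : u ≤ 1 := by rw [hu, div_le_one hc]; exact hX.2
    have hv0 : 0 ≤ v := div_nonneg hY.1 hc.le
    have hv1 : v ≤ 1 := by rw [hv, div_le_one hc]; exact hY.2
    have hA : (1 + ε) ^ u ≤ 1 + u * ε := by
      have := aux_rpow_le_linear h1ε hu0 hu1
      linarith [this]
    have hB : (1 - ε) ^ v ≤ 1 - v * ε := by
      have := aux_rpow_le_linear h2ε hv0 hv1
      have h' : 1 + v * ((1 - ε) - 1) = 1 - v * ε := by ring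
      linarith [this]
    have hgω : g ω ≤ (1 + u * ε) * (1 - v * ε) := by
      apply mul_le_mul hA hB (Real.rpow_nonneg h2ε.le _)
      nlinarith
    have hhω : h ω = 1 + (ε/c) * (x (m+1) ω - y (m+1) ω) := by
      simp [hh_def]
    rw [hhω]
    have huv : (ε/c) * (x (m+1) ω - y (m+1) ω) = u * ε - v * ε := by
      rw [hu, hv]; field_simp
    rw [huv]
    nlinarith [mul_nonneg (mul_nonneg hu0 hv0) (mul_nonneg hε0.le hε0.le)]
  -- conditional expectation of h is ≤ 1 a.e.
  have hcondh : ∀ᵐ ω ∂P, (P[h|ℱ m]) ω ≤ 1 := by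
    have e1 : P[h|ℱ m] =ᵐ[P]
        (fun _ => (1:ℝ)) + (ε/c) • P[x (m+1) - y (m+1)|ℱ m] := by
      calc P[h|ℱ m]
          =ᵐ[P] P[(fun _ => (1:ℝ))|ℱ m] + P[(ε/c) • (x (m+1) - y (m+1))|ℱ m] :=
            condExp_add (integrable_const 1) ((hxint.sub hyint).smul (ε/c)) _
        _ =ᵐ[P] (fun _ => (1:ℝ)) + (ε/c) • P[x (m+1) - y (m+1)|ℱ m] := by
            refine Filter.EventuallyEq.add ?_ (condExp_smul (ε/c) _ _)
            rw [condExp_const (ℱ.le m)]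
    have e2 : P[x (m+1) - y (m+1)|ℱ m] =ᵐ[P] P[x (m+1)|ℱ m] - P[y (m+1)|ℱ m] :=
      condExp_sub hxint hyint _
    have hc' := hcond (m+1) (Nat.le_add_left 1 m)
    simp only [Nat.add_sub_cancel] at hc'
    filter_upwards [e1, e2, hc'] with ω he1 he2 hle
    rw [he1]
    simp only [Pi.add_apply, Pi.smul_apply, smul_eq_mul, he2, Pi.sub_apply]
    have : (ε/c) * ((P[x (m+1)|ℱ m]) ω - (P[y (m+1)|ℱ m]) ω) ≤ 0 :=
      mul_nonpos_of_nonneg_of_nonpos (div_nonneg hε0.le hc.le) (by linarith)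
    linarith
  -- monotonicity of conditional expectation
  have hmono : P[g|ℱ m] ≤ᵐ[P] P[h|ℱ m] := condExp_mono hgint hhint hgh
  -- pull-out
  have hpull : P[φ m * g|ℱ m] =ᵐ[P] φ m * P[g|ℱ m] :=
    condExp_mul_of_stronglyMeasurable_left (hmeas m).stronglyMeasurable
      (hfac ▸ hφint (m+1)) hgint
  rw [hfac]
  filter_upwards [hpull, hmono, hcondh] with ω h1 h2 h3
  rw [h1, Pi.mul_apply]
  calc φ m ω * (P[g|ℱ m]) ω ≤ φ m ω * 1 :=
        mul_le_mul_of_nonneg_left (le_trans h2 h3) (hnn m ω)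
    _ = φ m ω := mul_one _
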